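/- Let p < 0 and q > 0 with 4p + q ≤ 0, and let (x₁, x₂, x₃, x₄) be the solution on [0, ∞) of the ODE system x₁' = x₂, x₂' = 4x₁ + x₃, x₃' = x₄, x₄' = 4x₁x₄ with initial data x₁(0) = 0, x₂(0) = p, x₃(0) = 0, x₄(0) = q. Then x₂(t) < 0 for all t > 0, and x₂(t) → −∞ as t → +∞. -/

import Mathlib

open Filter Set

lemma helper_le {f f' : ℝ → ℝ} {a b : ℝ} (ha : 0 ≤ a)
    (hd : ∀ t ∈ Set.Icc a b, HasDerivWithinAt f (f' t) (Set.Ici 0) t)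
    (hle : ∀ t ∈ Set.Ioo a b, f' t ≤ 0) :
    ∀ t ∈ Set.Icc a b, f t ≤ f a := by
  intro t ht
  have hab : a ≤ b := ht.1.trans ht.2
  have hsub : Set.Icc a b ⊆ Set.Ici 0 := fun s hs => le_trans ha hs.1
  have hcont : ContinuousOn f (Set.Icc a b) := fun s hs =>
    ((hd s hs).continuousWithinAt).mono hsub
  have hD : ∀ s ∈ interior (Set.Icc a b), HasDerivAt f (f' s) s := by
    intro s hs
    rw [interior_Icc] at hs
    exact (hd s (Ioo_subset_Icc_self hs)).hasDerivAt
      (Ici_mem_nhds (lt_of_le_of_lt ha hs.1))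
  have hanti : AntitoneOn f (Set.Icc a b) := by
    apply antitoneOn_of_deriv_nonpos (convex_Icc a b) hcont
    · exact fun s hs => (hD s hs).differentiableAt.differentiableWithinAt
    · intro s hs
      rw [(hD s hs).deriv]
      rw [interior_Icc] at hs
      exact hle s hs
  exact hanti ⟨le_refl a, hab⟩ ht ht.1

lemma helper_ge {f f' : ℝ → ℝ} {a b : ℝ} (ha : 0 ≤ a)
    (hd : ∀ t ∈ Set.Icc a b, HasDerivWithinAt f (f' t) (Set.Ici 0) t)
    (hge : ∀ t ∈ Set.Ioo a b, 0 ≤ f' t) :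
    ∀ t ∈ Set.Icc a b, f a ≤ f t := by
  intro t ht
  have := helper_le (f := fun s => -f s) (f' := fun s => -f' s) ha
    (fun s hs => (hd s hs).neg) (fun s hs => neg_nonpos.2 (hge s hs)) t ht
  simpa using this

/-- For `p < 0`, `q > 0` with `4p + q ≤ 0`, the solution on `[0, ∞)` of the system
`x₁' = x₂`, `x₂' = 4x₁ + x₃`, `x₃' = x₄`, `x₄' = 4x₁x₄` with initial data
`(0, p, 0, q)` satisfies `x₂(t) < 0` for all `t > 0` and `x₂(t) → −∞` as `t → +∞`. -/
theorem x₂_negative_and_tendsto_atBot (p q : ℝ) (hp : p < 0) (hq : 0 < q)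
    (hpq : 4 * p + q ≤ 0)
    (x₁ x₂ x₃ x₄ : ℝ → ℝ)
    (hx₁ : ∀ t ∈ Set.Ici (0 : ℝ), HasDerivWithinAt x₁ (x₂ t) (Set.Ici 0) t)
    (hx₂ : ∀ t ∈ Set.Ici (0 : ℝ), HasDerivWithinAt x₂ (4 * x₁ t + x₃ t) (Set.Ici 0) t)
    (hx₃ : ∀ t ∈ Set.Ici (0 : ℝ), HasDerivWithinAt x₃ (x₄ t) (Set.Ici 0) t)
    (hx₄ : ∀ t ∈ Set.Ici (0 : ℝ), HasDerivWithinAt x₄ (4 * x₁ t * x₄ t) (Set.Ici 0) t)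
    (hi₁ : x₁ 0 = 0) (hi₂ : x₂ 0 = p) (hi₃ : x₃ 0 = 0) (hi₄ : x₄ 0 = q) :
    (∀ t > (0 : ℝ), x₂ t < 0) ∧ Tendsto x₂ atTop atBot := by
  have hIcc : ∀ {a b : ℝ}, 0 ≤ a → Set.Icc a b ⊆ Set.Ici 0 :=
    fun ha s hs => le_trans ha hs.1
  have hc₁ : ContinuousOn x₁ (Set.Ici 0) := fun t ht => (hx₁ t ht).continuousWithinAt
  have hc₂ : ContinuousOn x₂ (Set.Ici 0) := fun t ht => (hx₂ t ht).continuousWithinAt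
  have hc₄ : ContinuousOn x₄ (Set.Ici 0) := fun t ht => (hx₄ t ht).continuousWithinAt
  -- derivative of `exp (c * s + d)` as a `HasDerivWithinAt` on `Ici 0`
  have hexp : ∀ (c d : ℝ) (t : ℝ),
      HasDerivWithinAt (fun s => Real.exp (c * s + d)) (Real.exp (c * t + d) * c)
        (Set.Ici 0) t := by
    intro c d t
    have h1 : HasDerivAt (fun s : ℝ => c * s + d) c t := by
      simpa using ((hasDerivAt_id t).const_mul c).add_const d
    exact (h1.exp).hasDerivWithinAt
  -- Step A : x₄ is positive on [0, ∞)
  have hx₄pos : ∀ t ∈ Set.Ici (0 : ℝ), 0 < x₄ t := by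
    by_contra hcon
    push_neg at hcon
    obtain ⟨b, hb0, hb⟩ := hcon
    have hbne : b ≠ 0 := by
      intro h; rw [h, hi₄] at hb; linarith
    have hbpos : 0 < b := lt_of_le_of_ne hb0 (Ne.symm hbne)
    set S : Set ℝ := Set.Icc 0 b ∩ x₄ ⁻¹' Set.Iic 0 with hSdef
    have hSclosed : IsClosed S :=
      (hc₄.mono (hIcc le_rfl)).preimage_isClosed_of_isClosed isClosed_Icc isClosed_Iic
    have hSne : S.Nonempty := ⟨b, ⟨hb0, le_rfl⟩, hb⟩
    have hSbdd : BddBelow S := ⟨0, fun s hs => hs.1.1⟩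
    set t₀ := sInf S with ht₀def
    have ht₀S : t₀ ∈ S := hSclosed.csInf_mem hSne hSbdd
    have ht₀0 : 0 ≤ t₀ := ht₀S.1.1
    have ht₀b : t₀ ≤ b := ht₀S.1.2
    have hx₄t₀ : x₄ t₀ ≤ 0 := ht₀S.2
    have ht₀pos : 0 < t₀ := by
      rcases lt_or_eq_of_le ht₀0 with h | h
      · exact h
      · exfalso; rw [← h, hi₄] at hx₄t₀; linarith
    have hbefore : ∀ s, 0 ≤ s → s < t₀ → 0 < x₄ s := by
      intro s h1 h2
      by_contra hle
      push_neg at hle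
      have : s ∈ S := ⟨⟨h1, h2.le.trans ht₀b⟩, hle⟩
      exact absurd (csInf_le hSbdd this) (not_le.2 h2)
    obtain ⟨C, hC⟩ := (isCompact_Icc : IsCompact (Set.Icc (0:ℝ) t₀)).exists_bound_of_continuousOn
      (hc₁.mono (hIcc le_rfl))
    -- g s = x₄ s * exp (4C s) is nondecreasing on [0, t₀]
    have hgd : ∀ s ∈ Set.Icc (0:ℝ) t₀,
        HasDerivWithinAt (fun u => x₄ u * Real.exp (4*C*u + 0))
          (4 * x₁ s * x₄ s * Real.exp (4*C*s + 0) + x₄ s * (Real.exp (4*C*s + 0) * (4*C)))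
          (Set.Ici 0) s := by
      intro s hs
      exact (hx₄ s (hIcc le_rfl hs)).mul (hexp (4*C) 0 s)
    have hge := helper_ge le_rfl hgd ?_
    · have h1 := hge t₀ ⟨ht₀0, le_rfl⟩
      rw [hi₄] at h1
      have he0 : Real.exp (4*C*0 + 0) = 1 := by norm_num
      rw [he0] at h1
      have hept := Real.exp_pos (4*C*t₀ + 0)
      nlinarith
    · intro s hs
      have hx1 : ‖x₁ s‖ ≤ C := hC s (Ioo_subset_Icc_self hs)
      have hx1' : -C ≤ x₁ s := (abs_le.1 (by simpa using hx1)).1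
      have hx4 : 0 < x₄ s := hbefore s hs.1.le hs.2
      have he := Real.exp_pos (4*C*s + 0)
      nlinarith [mul_nonneg (mul_nonneg hx4.le he.le) (by linarith : (0:ℝ) ≤ 4 * x₁ s + 4*C)]
  -- Chain: if x₁ ≤ 0 on (0, T), then x₂ ≤ p on [0, T]
  have chain : ∀ T, 0 ≤ T → (∀ s ∈ Set.Ioo (0:ℝ) T, x₁ s ≤ 0) →
      ∀ t ∈ Set.Icc (0:ℝ) T, x₂ t ≤ p := by
    intro T hT h1
    -- E = x₄ + 4 x₂ - 2(x₃ + 4 x₁); (E e^{2t})' = 4 x₁ x₄ e^{2t}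
    have hEd : ∀ t ∈ Set.Icc (0:ℝ) T,
        HasDerivWithinAt (fun s => (x₄ s + 4*x₂ s - 2*(x₃ s + 4*x₁ s)) * Real.exp (2*s + 0))
          (4 * x₁ t * x₄ t * Real.exp (2*t + 0)) (Set.Ici 0) t := by
      intro t ht
      have ht' := hIcc le_rfl ht
      have hin : HasDerivWithinAt (fun s => x₄ s + 4*x₂ s - 2*(x₃ s + 4*x₁ s))
          ((4 * x₁ t * x₄ t) + 4*(4 * x₁ t + x₃ t) - 2*(x₄ t + 4*(x₂ t))) (Set.Ici 0) t :=
        ((hx₄ t ht').add ((hx₂ t ht').const_mul 4)).sub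
          (((hx₃ t ht').add ((hx₁ t ht').const_mul 4)).const_mul 2)
      have := hin.mul (hexp 2 0 t)
      refine this.congr_deriv ?_
      ring
    have hE := helper_le le_rfl hEd (by
      intro s hs
      have hx1 := h1 s hs
      have hx4 := (hx₄pos s (le_of_lt hs.1)).le
      have he := (Real.exp_pos (2*s + 0)).le
      nlinarith [mul_nonneg (mul_nonneg (neg_nonneg.2 hx1) hx4) he])
    have hE0 : ∀ t ∈ Set.Icc (0:ℝ) T, x₄ t + 4*x₂ t - 2*(x₃ t + 4*x₁ t) ≤ 0 := by
      intro t ht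
      have h := hE t ht
      rw [hi₁, hi₂, hi₃, hi₄] at h
      have he0 : Real.exp (2*(0:ℝ) + 0) = 1 := by norm_num
      rw [he0] at h
      have hept := Real.exp_pos (2*t + 0)
      nlinarith
    -- F = x₃ + 4 x₁; (F e^{-2t})' = E e^{-2t}
    have hFd : ∀ t ∈ Set.Icc (0:ℝ) T,
        HasDerivWithinAt (fun s => (x₃ s + 4*x₁ s) * Real.exp ((-2)*s + 0))
          ((x₄ t + 4*x₂ t - 2*(x₃ t + 4*x₁ t)) * Real.exp ((-2)*t + 0)) (Set.Ici 0) t := by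
      intro t ht
      have ht' := hIcc le_rfl ht
      have hin : HasDerivWithinAt (fun s => x₃ s + 4*x₁ s) (x₄ t + 4*(x₂ t)) (Set.Ici 0) t :=
        (hx₃ t ht').add ((hx₁ t ht').const_mul 4)
      have := hin.mul (hexp (-2) 0 t)
      refine this.congr_deriv ?_
      ring
    have hF := helper_le le_rfl hFd (by
      intro s hs
      have hEs := hE0 s (Ioo_subset_Icc_self hs)
      have he := (Real.exp_pos ((-2)*s + 0)).le
      nlinarith)
    have hF0 : ∀ t ∈ Set.Icc (0:ℝ) T, x₃ t + 4*x₁ t ≤ 0 := by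
      intro t ht
      have h := hF t ht
      rw [hi₁, hi₃] at h
      have hept := Real.exp_pos ((-2)*t + 0)
      nlinarith
    have hx2d : ∀ t ∈ Set.Icc (0:ℝ) T,
        HasDerivWithinAt x₂ (4 * x₁ t + x₃ t) (Set.Ici 0) t :=
      fun t ht => hx₂ t (hIcc le_rfl ht)
    have h := helper_le le_rfl hx2d (by
      intro s hs
      have := hF0 s (Ioo_subset_Icc_self hs)
      linarith)
    intro t ht
    have := h t ht
    rwa [hi₂] at this
  -- local negativity of x₂ near 0
  have hloc : ∃ δ > (0:ℝ), ∀ t ∈ Set.Icc (0:ℝ) δ, x₂ t < 0 := by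
    have ht : Filter.Tendsto x₂ (nhdsWithin 0 (Set.Ici 0)) (nhds (x₂ 0)) :=
      (hx₂ 0 Set.self_mem_Ici).continuousWithinAt
    have hev : x₂ ⁻¹' Set.Iio 0 ∈ nhdsWithin (0:ℝ) (Set.Ici 0) :=
      ht (Iio_mem_nhds (by rw [hi₂]; exact hp))
    rw [mem_nhdsGE_iff_exists_Icc_subset] at hev
    obtain ⟨u, hu, hsub⟩ := hev
    exact ⟨u, hu, fun t ht => hsub ht⟩
  -- x₁ ≤ 0 on [0, ∞)
  have hx₁nonpos : ∀ t ∈ Set.Ici (0:ℝ), x₁ t ≤ 0 := by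
    by_contra hcon
    push_neg at hcon
    obtain ⟨b, hb0, hb⟩ := hcon
    obtain ⟨δ, hδ, hδ2⟩ := hloc
    have hbne : b ≠ 0 := by intro h; rw [h, hi₁] at hb; linarith
    have hbpos : 0 < b := lt_of_le_of_ne hb0 (Ne.symm hbne)
    have hx1δ : ∀ t ∈ Set.Icc (0:ℝ) δ, x₁ t ≤ 0 := by
      intro t ht
      have := helper_le le_rfl (fun s hs => hx₁ s (hIcc le_rfl hs))
        (fun s hs => (hδ2 s (Ioo_subset_Icc_self hs)).le) t ht
      rwa [hi₁] at this
    set a := min δ b with hadef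
    have hapos : 0 < a := lt_min hδ hbpos
    set S : Set ℝ := Set.Icc a b ∩ x₁ ⁻¹' Set.Ici 0 with hSdef
    have hSclosed : IsClosed S :=
      ((hc₁.mono (hIcc hapos.le)).preimage_isClosed_of_isClosed isClosed_Icc isClosed_Ici)
    have hSne : S.Nonempty := ⟨b, ⟨min_le_right _ _, le_rfl⟩, hb.le⟩
    have hSbdd : BddBelow S := ⟨a, fun s hs => hs.1.1⟩
    set t₀ := sInf S with ht₀def
    have ht₀S : t₀ ∈ S := hSclosed.csInf_mem hSne hSbdd
    have ht₀a : a ≤ t₀ := ht₀S.1.1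
    have ht₀b : t₀ ≤ b := ht₀S.1.2
    have hx₁t₀ : 0 ≤ x₁ t₀ := ht₀S.2
    have ht₀pos : 0 < t₀ := lt_of_lt_of_le hapos ht₀a
    have h1 : ∀ s ∈ Set.Ioo (0:ℝ) t₀, x₁ s ≤ 0 := by
      intro s hs
      rcases le_or_gt s δ with h | h
      · exact hx1δ s ⟨hs.1.le, h⟩
      · have hsa : a ≤ s := le_trans (min_le_left _ _) h.le
        have hsb : s ≤ b := hs.2.le.trans ht₀b
        by_contra hgt
        push_neg at hgt
        have : s ∈ S := ⟨⟨hsa, hsb⟩, hgt.le⟩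
        exact absurd (csInf_le hSbdd this) (not_le.2 hs.2)
    have hx2 := chain t₀ ht₀pos.le h1
    -- x₁ t₀ ≤ p t₀
    have hlind : ∀ t ∈ Set.Icc (0:ℝ) t₀,
        HasDerivWithinAt (fun s => x₁ s - p * s) (x₂ t - p) (Set.Ici 0) t := by
      intro t ht
      have h2 : HasDerivAt (fun s : ℝ => p * s) p t := by
        simpa using (hasDerivAt_id t).const_mul p
      exact (hx₁ t (hIcc le_rfl ht)).sub h2.hasDerivWithinAt
    have hlin := helper_le le_rfl hlind (by
      intro s hs
      have := hx2 s (Ioo_subset_Icc_self hs)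
      linarith)
    have := hlin t₀ ⟨ht₀pos.le, le_rfl⟩
    rw [hi₁] at this
    simp only [mul_zero, sub_zero] at this
    nlinarith
  -- global bound x₂ ≤ p and part 1
  have hx₂p : ∀ t ∈ Set.Ici (0:ℝ), x₂ t ≤ p := by
    intro t ht
    exact chain t ht (fun s hs => hx₁nonpos s (le_of_lt hs.1)) t ⟨ht, le_rfl⟩
  have part1 : ∀ t > (0:ℝ), x₂ t < 0 := fun t ht => lt_of_le_of_lt (hx₂p t ht.le) hp
  -- x₁ t ≤ p t
  have hx₁lin : ∀ t ∈ Set.Ici (0:ℝ), x₁ t ≤ p * t := by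
    intro t ht
    have hlind : ∀ s ∈ Set.Icc (0:ℝ) t,
        HasDerivWithinAt (fun u => x₁ u - p * u) (x₂ s - p) (Set.Ici 0) s := by
      intro s hs
      have h2 : HasDerivAt (fun u : ℝ => p * u) p s := by
        simpa using (hasDerivAt_id s).const_mul p
      exact (hx₁ s (hIcc le_rfl hs)).sub h2.hasDerivWithinAt
    have hlin := helper_le le_rfl hlind (by
      intro s hs
      have := hx₂p s (le_of_lt hs.1)
      linarith) t ⟨ht, le_rfl⟩
    rw [hi₁] at hlin
    simp only [mul_zero, sub_zero] at hlin
    linarith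
  -- x₄ decays exponentially for t ≥ 1
  have hx₄exp : ∀ t, 1 ≤ t → x₄ t ≤ x₄ 1 * Real.exp (4*p*t + (-(4*p))) := by
    intro t htt
    have hfd : ∀ s ∈ Set.Icc (1:ℝ) t,
        HasDerivWithinAt (fun u => x₄ u * Real.exp ((-(4*p))*u + 4*p))
          (4 * x₁ s * x₄ s * Real.exp ((-(4*p))*s + 4*p)
            + x₄ s * (Real.exp ((-(4*p))*s + 4*p) * (-(4*p)))) (Set.Ici 0) s :=
      fun s hs => (hx₄ s (hIcc zero_le_one hs)).mul (hexp (-(4*p)) (4*p) s)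
    have h := helper_le zero_le_one hfd (by
      intro s hs
      have hs1 : (1:ℝ) ≤ s := hs.1.le
      have hx1 : x₁ s ≤ p * s := hx₁lin s (Set.mem_Ici.2 (by linarith))
      have hx1' : x₁ s ≤ p := by nlinarith
      have hx4 := (hx₄pos s (Set.mem_Ici.2 (by linarith))).le
      have he := (Real.exp_pos ((-(4*p))*s + 4*p)).le
      nlinarith [mul_nonneg (mul_nonneg hx4 he) (by linarith : (0:ℝ) ≤ 4*p - 4*x₁ s)])
      t ⟨htt, le_rfl⟩
    have he1 : Real.exp ((-(4*p))*(1:ℝ) + 4*p) = 1 := by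
      rw [show (-(4*p))*(1:ℝ) + 4*p = 0 by ring, Real.exp_zero]
    rw [he1, mul_one] at h
    have hmul : Real.exp ((-(4*p))*t + 4*p) * Real.exp (4*p*t + (-(4*p))) = 1 := by
      rw [← Real.exp_add, show (-(4*p))*t + 4*p + (4*p*t + (-(4*p))) = 0 by ring, Real.exp_zero]
    have hept := (Real.exp_pos (4*p*t + (-(4*p)))).le
    calc x₄ t = x₄ t * Real.exp ((-(4*p))*t + 4*p) * Real.exp (4*p*t + (-(4*p))) := by
          rw [mul_assoc, hmul, mul_one]
      _ ≤ x₄ 1 * Real.exp (4*p*t + (-(4*p))) := mul_le_mul_of_nonneg_right h hept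
  -- x₃ is bounded above on [1, ∞)
  set C : ℝ := x₃ 1 - x₄ 1 / (4*p) with hCdef
  have hp4 : (4:ℝ)*p ≠ 0 := by intro h; nlinarith
  have hx₃bd : ∀ t, 1 ≤ t → x₃ t ≤ C := by
    intro t htt
    have hgd : ∀ s ∈ Set.Icc (1:ℝ) t,
        HasDerivWithinAt (fun u => x₃ u - (x₄ 1 / (4*p)) * Real.exp (4*p*u + (-(4*p))))
          (x₄ s - x₄ 1 * Real.exp (4*p*s + (-(4*p)))) (Set.Ici 0) s := by
      intro s hs
      have hde : HasDerivWithinAt (fun u => (x₄ 1 / (4*p)) * Real.exp (4*p*u + (-(4*p))))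
          ((x₄ 1 / (4*p)) * (Real.exp (4*p*s + (-(4*p))) * (4*p))) (Set.Ici 0) s :=
        (hexp (4*p) (-(4*p)) s).const_mul _
      have := (hx₃ s (hIcc zero_le_one hs)).sub hde
      refine this.congr_deriv ?_
      field_simp [hp.ne]
    have h := helper_le zero_le_one hgd (by
      intro s hs
      have := hx₄exp s hs.1.le
      linarith) t ⟨htt, le_rfl⟩
    have he1 : Real.exp (4*p*(1:ℝ) + (-(4*p))) = 1 := by
      rw [show 4*p*(1:ℝ) + (-(4*p)) = 0 by ring, Real.exp_zero]
    rw [he1, mul_one] at h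
    have hept := (Real.exp_pos (4*p*t + (-(4*p)))).le
    have hx41 := (hx₄pos 1 (Set.mem_Ici.2 zero_le_one)).le
    have hcoef : x₄ 1 / (4*p) ≤ 0 := div_nonpos_of_nonneg_of_nonpos hx41 (by linarith)
    have hterm : x₄ 1 / (4*p) * Real.exp (4*p*t + (-(4*p))) ≤ 0 :=
      mul_nonpos_of_nonpos_of_nonneg hcoef hept
    rw [hCdef]
    linarith [h, hterm]
  -- quadratic upper bound for x₂ on [1, ∞)
  have hx₂quad : ∀ t, 1 ≤ t → x₂ t ≤ (x₂ 1 - C - 2*p) + (C * t + 2*p * t^2) := by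
    intro t htt
    have hhd : ∀ s ∈ Set.Icc (1:ℝ) t,
        HasDerivWithinAt (fun u => x₂ u - (C * u + 2*p * u^2))
          ((4 * x₁ s + x₃ s) - (C + 2*p * (2*s))) (Set.Ici 0) s := by
      intro s hs
      have h1 : HasDerivAt (fun u : ℝ => C * u + 2*p * u^2) (C + 2*p * (2*s)) s := by
        have ha : HasDerivAt (fun u : ℝ => C * u) C s := by
          simpa using (hasDerivAt_id s).const_mul C
        have hb : HasDerivAt (fun u : ℝ => 2*p * u^2) (2*p * (2*s)) s := by
          have := (hasDerivAt_pow 2 s).const_mul (2*p)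
          simpa using this
        exact ha.add hb
      exact (hx₂ s (hIcc zero_le_one hs)).sub h1.hasDerivWithinAt
    have h := helper_le zero_le_one hhd (by
      intro s hs
      have h1 : x₁ s ≤ p * s := hx₁lin s (Set.mem_Ici.2 (by linarith [hs.1.le]))
      have h3 : x₃ s ≤ C := hx₃bd s hs.1.le
      nlinarith) t ⟨htt, le_rfl⟩
    nlinarith [h]
  -- conclude the tendsto
  have htend : Tendsto x₂ atTop atBot := by
    have hb1 : Tendsto (fun t : ℝ => 2*p*t) atTop atBot :=
      (tendsto_const_mul_atBot_of_neg (by linarith)).2 tendsto_id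
    have hb2 : Tendsto (fun t : ℝ => C + 2*p*t) atTop atBot :=
      tendsto_atBot_add_const_left _ C hb1
    have hb3 : Tendsto (fun t : ℝ => t * (C + 2*p*t)) atTop atBot :=
      Tendsto.atTop_mul_atBot₀ tendsto_id hb2
    have hb4 : Tendsto (fun t : ℝ => (x₂ 1 - C - 2*p) + t * (C + 2*p*t)) atTop atBot :=
      tendsto_atBot_add_const_left _ _ hb3
    apply tendsto_atBot_mono' atTop _ hb4
    filter_upwards [eventually_ge_atTop (1:ℝ)] with t htt
    have := hx₂quad t htt
    nlinarith [this]
  exact ⟨part1, htend⟩
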